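/- arXiv:1712.04217 — 2 statements merged into one kernel-verified Lean document; each statement's English description precedes it below -/
import Mathlib

section
/- Let n, t be natural numbers with n ≥ 1 and t ≥ 2, and for each τ ∈ {1, …, t−1} let w_τ : Fin n × Fin n → ℚ be a weight function (the cost of assigning position i at time τ to position j at time τ+1). Then the minimum over all t-tuples (π_1, …, π_t) of permutations of Fin n of the total cost ∑_{τ=1}^{t−1} ∑_{i=1}^{n} w_τ(π_τ(i), π_{τ+1}(i)) equals the sum ∑_{τ=1}^{t−1} min_{σ ∈ Sym(Fin n)} ∑_{i=1}^{n} w_τ(i, σ(i)) of the optimal values of t−1 independent (minimum-weight perfect bipartite matching) assignment problems. (This is the decomposition underlying Theorem 3.1: the positionally determined Markov-type tracking problem Trac(d) decomposes into uncoupled minimum-weight perfect bipartite matching problems.) -/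
open Finset

/-- The positionally determined Markov-type tracking problem decomposes into `t-1`
uncoupled minimum-weight perfect bipartite matching (assignment) problems:
the minimum over all `t`-tuples of permutations of the total coupling cost equals
the sum over the time steps of the optimal assignment values. -/
theorem stmt_0 (n t : ℕ) (hn : 1 ≤ n) (ht : 2 ≤ t)
    (w : Fin (t - 1) → Fin n × Fin n → ℚ) :
    Finset.univ.inf' Finset.univ_nonempty
      (fun π : Fin t → Equiv.Perm (Fin n) =>
        ∑ τ : Fin (t - 1), ∑ i : Fin n,
          w τ (π ⟨τ.1, by have := τ.isLt; omega⟩ i,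
               π ⟨τ.1 + 1, by have := τ.isLt; omega⟩ i))
    = ∑ τ : Fin (t - 1), Finset.univ.inf' Finset.univ_nonempty
        (fun σ : Equiv.Perm (Fin n) => ∑ i : Fin n, w τ (i, σ i)) := by
  apply le_antisymm
  · -- build an optimal coupling from per-step minimizers
    choose σ hσmem hσ using fun τ : Fin (t - 1) =>
      Finset.exists_mem_eq_inf' (Finset.univ_nonempty (α := Equiv.Perm (Fin n)))
        (fun σ : Equiv.Perm (Fin n) => ∑ i : Fin n, w τ (i, σ i))
    set g : ℕ → Equiv.Perm (Fin n) := fun k =>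
      Nat.rec 1 (fun k acc => (if h : k < t - 1 then σ ⟨k, h⟩ else 1) * acc) k with hg
    have hstep : ∀ τ : Fin (t - 1), g (τ.1 + 1) = σ τ * g τ.1 := by
      intro τ
      simp [hg, τ.isLt]
    refine le_trans (Finset.inf'_le _ (Finset.mem_univ (fun k : Fin t => g k.1))) ?_
    apply le_of_eq
    refine Finset.sum_congr rfl fun τ _ => ?_
    have h1 : ∀ i : Fin n,
        w τ (g (τ.1) i, g (τ.1 + 1) i) = w τ (g τ.1 i, σ τ (g τ.1 i)) := by
      intro i; rw [hstep τ]; rfl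
    calc ∑ i : Fin n, w τ (g τ.1 i, g (τ.1 + 1) i)
        = ∑ i : Fin n, w τ (g τ.1 i, σ τ (g τ.1 i)) := by
          exact Finset.sum_congr rfl fun i _ => h1 i
      _ = ∑ i : Fin n, w τ (i, σ τ i) := by
          exact Fintype.sum_equiv (g τ.1) _ _ (fun i => rfl)
      _ = _ := (hσ τ).symm
  · apply Finset.le_inf'
    intro π _
    refine Finset.sum_le_sum fun τ _ => ?_
    set a : Equiv.Perm (Fin n) := π ⟨τ.1, by have := τ.isLt; omega⟩
    set b : Equiv.Perm (Fin n) := π ⟨τ.1 + 1, by have := τ.isLt; omega⟩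
    calc Finset.univ.inf' Finset.univ_nonempty
          (fun σ : Equiv.Perm (Fin n) => ∑ i : Fin n, w τ (i, σ i))
        ≤ ∑ i : Fin n, w τ (i, (b * a⁻¹) i) :=
          Finset.inf'_le _ (Finset.mem_univ (b * a⁻¹))
      _ = ∑ i : Fin n, w τ (a i, b i) := by
          rw [← Equiv.sum_comp a (fun i => w τ (i, (b * a⁻¹) i))]
          exact Finset.sum_congr rfl fun i _ => by simp
end

section
/- Let G be a finite subset of ℤ × ℤ and let W_1, …, W_l ⊆ G be pairwise disjoint sets (windows) such that each W_i is contained in a single horizontal line ℤ × {c_i} or a single vertical line {r_i} × ℤ. Let A be the 0–1 point-line incidence matrix of G with respect to the horizontal and vertical lines (rows indexed by lines, columns by the points of G, entry 1 exactly when the point lies on the line), and let H be the 0–1 matrix whose i-th row is the indicator vector of W_i (columns indexed by the points of G). Then the stacked matrix consisting of the rows of A followed by the rows of H is totally unimodular. (This is the mathematical core of Theorem 4.2, implying that tomography under such window constraints is polynomial-time solvable via linear programming.) -/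
open Matrix in
lemma det01_bipartite : ∀ (k : ℕ) (N : Matrix (Fin k) (Fin k) ℚ) (cls : Fin k → Bool),
    (∀ x y, N x y = 0 ∨ N x y = 1) →
    (∀ y (x₁ x₂ : Fin k), cls x₁ = cls x₂ → N x₁ y ≠ 0 → N x₂ y ≠ 0 → x₁ = x₂) →
    N.det ∈ Set.range SignType.cast := by
  intro k
  induction k with
  | zero => intro N cls _ _; exact ⟨1, by simp⟩
  | succ k ih =>
    intro N cls h01 hcol
    by_cases h1 : ∃ y₀ x₀, N x₀ y₀ ≠ 0 ∧ ∀ x, N x y₀ ≠ 0 → x = x₀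
    · obtain ⟨y₀, x₀, hx₀, huniq⟩ := h1
      rw [Matrix.det_succ_column N y₀]
      rw [Finset.sum_eq_single x₀]
      · have hminor := ih (N.submatrix x₀.succAbove y₀.succAbove) (cls ∘ x₀.succAbove)
          (fun x y => h01 _ _)
          (fun y x₁ x₂ hc h1' h2' => Fin.succAbove_right_injective
            (hcol _ _ _ hc h1' h2'))
        obtain ⟨s, hs⟩ := hminor
        have hN : N x₀ y₀ = 1 := (h01 x₀ y₀).resolve_left hx₀
        rcases neg_one_pow_eq_or ℚ (x₀ + y₀ : ℕ) with h | h
        · exact ⟨s, by rw [h, hN, hs]; ring⟩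
        · refine ⟨-s, ?_⟩
          rw [h, hN, ← hs]
          cases s <;> norm_num
      · intro x _ hx
        have : N x y₀ = 0 := by
          by_contra h; exact hx (huniq x h)
        simp [this]
      · simp
    · push_neg at h1
      have : N.det = 0 := by
        rw [← Matrix.exists_vecMul_eq_zero_iff]
        refine ⟨fun x => if cls x then 1 else -1, ?_, ?_⟩
        · intro h
          have := congrFun h 0
          by_cases hc : cls 0 <;> simp [hc] at this
        · ext y
          by_cases hz : ∀ x, N x y = 0
          · simp [Matrix.vecMul, dotProduct, hz]
          · push_neg at hz
            obtain ⟨x₁, hx₁⟩ := hz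
            obtain ⟨x₂, hx₂, hne⟩ := h1 y x₁ hx₁
            have hcls : cls x₁ ≠ cls x₂ := fun hc => hne (hcol y x₂ x₁ hc.symm hx₂ hx₁)
            have hval : ∀ x, N x y ≠ 0 → (x = x₁ ∨ x = x₂) := by
              intro x hx
              by_cases h : cls x = cls x₁
              · exact Or.inl (hcol y x x₁ h hx hx₁)
              · refine Or.inr (hcol y x x₂ ?_ hx hx₂)
                revert h hcls
                cases cls x <;> cases cls x₁ <;> cases cls x₂ <;> simp
            have e1 : N x₁ y = 1 := (h01 x₁ y).resolve_left hx₁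
            have e2 : N x₂ y = 1 := (h01 x₂ y).resolve_left hx₂
            have hx12 : x₁ ≠ x₂ := fun h => hne (h ▸ rfl)
            simp only [Matrix.vecMul, dotProduct, Pi.zero_apply]
            rw [Finset.sum_eq_add_of_mem x₁ x₂ (Finset.mem_univ _) (Finset.mem_univ _) hx12 ?_]
            · rw [e1, e2]
              revert hcls
              cases cls x₁ <;> cases cls x₂ <;> simp
            · intro x _ hx
              have : N x y = 0 := by
                by_contra h
                rcases hval x h with h | h <;> exact absurd h (by tauto)
              simp [this]
      rw [this]; exact ⟨0, by simp⟩

/-- The 0-1 point-line incidence matrix of a finite grid `G ⊆ ℤ × ℤ` (rows indexed by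
the vertical lines `Sum.inl r` and the horizontal lines `Sum.inr c`) stacked on top of
the 0-1 indicator rows of windows `W i ⊆ G` (rows indexed by `Fin l`). -/
def gridWindowMatrix (G : Finset (ℤ × ℤ)) (l : ℕ) (W : Fin l → Finset (ℤ × ℤ)) :
    Matrix ((ℤ ⊕ ℤ) ⊕ Fin l) {p // p ∈ G} ℚ :=
  fun r p =>
    match r with
    | Sum.inl (Sum.inl a) => if p.val.1 = a then 1 else 0
    | Sum.inl (Sum.inr b) => if p.val.2 = b then 1 else 0
    | Sum.inr i => if p.val ∈ W i then 1 else 0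

/-- If the windows `W 1, …, W l ⊆ G` are pairwise disjoint and each is contained in a
single horizontal line `ℤ × {c}` or a single vertical line `{r} × ℤ`, then the matrix
consisting of the X-ray (point-line incidence) rows of `G` for the two coordinate
directions followed by the indicator rows of the windows is totally unimodular. -/
theorem stmt_13 (G : Finset (ℤ × ℤ)) (l : ℕ) (W : Fin l → Finset (ℤ × ℤ))
    (hWG : ∀ i, W i ⊆ G)
    (hdisj : ∀ i j, i ≠ j → Disjoint (W i) (W j))
    (hline : ∀ i, (∃ c : ℤ, ∀ p ∈ W i, p.2 = c) ∨ (∃ r : ℤ, ∀ p ∈ W i, p.1 = r)) :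
    (gridWindowMatrix G l W).IsTotallyUnimodular := by
  classical
  -- choose a parent line for each window
  have hpl : ∀ i, ∃ pl : ℤ ⊕ ℤ, ∀ p ∈ W i, Sum.elim (fun a => p.1 = a) (fun b => p.2 = b) pl := by
    intro i
    rcases hline i with ⟨c, hc⟩ | ⟨r, hr⟩
    · exact ⟨Sum.inr c, fun p hp => hc p hp⟩
    · exact ⟨Sum.inl r, fun p hp => hr p hp⟩
  choose parent hpar using hpl
  intro k f g hf hg
  set M := (gridWindowMatrix G l W).submatrix f g with hMdef
  -- entries of M are 0 or 1
  have hM01 : ∀ x y, M x y = 0 ∨ M x y = 1 := by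
    intro x y
    rcases hfx : f x with (a | b) | i <;>
      simp only [hMdef, Matrix.submatrix_apply, hfx, gridWindowMatrix] <;> split_ifs <;> simp
  -- the relation: x' is a window row whose parent line row is x
  have detF : ∀ S : Finset (Fin k),
      (Matrix.of fun x y => M x y -
        ∑ x' ∈ S, if ∃ i, f x' = Sum.inr i ∧ f x = Sum.inl (parent i) then M x' y else 0).det
        = M.det := by
    intro S
    induction S using Finset.induction_on with
    | empty => congr 1; ext x y; simp
    | insert a S haS ih =>
      by_cases hex : ∃ x₀, ∃ i, f a = Sum.inr i ∧ f x₀ = Sum.inl (parent i)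
      · obtain ⟨x₀, i, hfa, hfx₀⟩ := hex
        have hax₀ : x₀ ≠ a := by
          intro h; rw [h, hfa] at hfx₀; exact absurd hfx₀ (by simp)
        have hkey : (Matrix.of fun x y => M x y -
            ∑ x' ∈ insert a S, if ∃ i, f x' = Sum.inr i ∧ f x = Sum.inl (parent i)
              then M x' y else 0)
            = Matrix.updateRow
              (Matrix.of fun x y => M x y -
                ∑ x' ∈ S, if ∃ i, f x' = Sum.inr i ∧ f x = Sum.inl (parent i)
                  then M x' y else 0) x₀
              ((Matrix.of fun x y => M x y -
                ∑ x' ∈ S, if ∃ i, f x' = Sum.inr i ∧ f x = Sum.inl (parent i)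
                  then M x' y else 0) x₀
               + (-1 : ℚ) • (Matrix.of fun x y => M x y -
                ∑ x' ∈ S, if ∃ i, f x' = Sum.inr i ∧ f x = Sum.inl (parent i)
                  then M x' y else 0) a) := by
          ext x y
          by_cases hx : x = x₀
          · subst hx
            rw [Matrix.updateRow_self]
            have hsa : (∑ x' ∈ S, if ∃ i, f x' = Sum.inr i ∧ f a = Sum.inl (parent i)
                then M x' y else 0) = 0 := by
              apply Finset.sum_eq_zero
              intro x' _
              rw [if_neg]
              rintro ⟨i', -, hfa'⟩
              rw [hfa] at hfa'; exact absurd hfa' (by simp)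
            simp only [Matrix.of_apply, Pi.add_apply, Pi.smul_apply, smul_eq_mul]
            rw [Finset.sum_insert haS, if_pos ⟨i, hfa, hfx₀⟩, hsa]
            ring
          · rw [Matrix.updateRow_ne hx]
            simp only [Matrix.of_apply]
            rw [Finset.sum_insert haS, if_neg, zero_add]
            rintro ⟨i', hfa', hfx'⟩
            rw [hfa] at hfa'
            obtain rfl : i' = i := by injection hfa'.symm
            exact hx (hf (hfx'.trans hfx₀.symm))
        rw [hkey, Matrix.det_updateRow_add_smul_self _ hax₀, ih]
      · have hex' : ∀ x, ¬∃ i, f a = Sum.inr i ∧ f x = Sum.inl (parent i) :=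
          fun x h => hex ⟨x, h⟩
        have : (Matrix.of fun x y => M x y -
            ∑ x' ∈ insert a S, if ∃ i, f x' = Sum.inr i ∧ f x = Sum.inl (parent i)
              then M x' y else 0)
            = (Matrix.of fun x y => M x y -
            ∑ x' ∈ S, if ∃ i, f x' = Sum.inr i ∧ f x = Sum.inl (parent i)
              then M x' y else 0) := by
          ext x y
          simp only [Matrix.of_apply]
          rw [Finset.sum_insert haS, if_neg (hex' x), zero_add]
        rw [this, ih]
  -- the value of the correction sum
  have hsum : ∀ x y, (∑ x' : Fin k, if ∃ i, f x' = Sum.inr i ∧ f x = Sum.inl (parent i)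
      then M x' y else 0) =
      if ∃ i, (∃ x', f x' = Sum.inr i) ∧ f x = Sum.inl (parent i) ∧ (g y).val ∈ W i
        then 1 else 0 := by
    intro x y
    split_ifs with hE
    · obtain ⟨i, ⟨x', hx'⟩, hx, hy⟩ := hE
      rw [Finset.sum_eq_single x']
      · rw [if_pos ⟨i, hx', hx⟩]
        simp [hMdef, gridWindowMatrix, hx', hy]
      · intro x'' _ hne
        split_ifs with hR
        · obtain ⟨i'', hx'', _⟩ := hR
          by_cases hy'' : (g y).val ∈ W i''
          · obtain rfl : i'' = i := by
              by_contra hne'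
              exact Finset.disjoint_left.mp (hdisj i'' i hne') hy'' hy
            exact absurd (hf (hx''.trans hx'.symm)) hne
          · simp [hMdef, gridWindowMatrix, hx'', hy'']
        · rfl
      · simp
    · apply Finset.sum_eq_zero
      intro x' _
      split_ifs with hR
      · obtain ⟨i, hx', hxp⟩ := hR
        by_cases hy : (g y).val ∈ W i
        · exact absurd ⟨i, ⟨x', hx'⟩, hxp, hy⟩ hE
        · simp [hMdef, gridWindowMatrix, hx', hy]
      · rfl
  -- if condition E holds then M x y = 1
  have hEM : ∀ x y, (∃ i, (∃ x', f x' = Sum.inr i) ∧ f x = Sum.inl (parent i) ∧ (g y).val ∈ W i)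
      → M x y = 1 := by
    rintro x y ⟨i, -, hx, hy⟩
    have := hpar i (g y).val hy
    rcases hp : parent i with a | b <;> rw [hp] at this hx <;>
      simp only [Sum.elim_inl, Sum.elim_inr] at this <;>
      simp [hMdef, gridWindowMatrix, hx, this]
  -- the corrected matrix
  set N := (Matrix.of fun x y => M x y -
      if ∃ i, (∃ x', f x' = Sum.inr i) ∧ f x = Sum.inl (parent i) ∧ (g y).val ∈ W i
        then (1:ℚ) else 0) with hNdef
  have hN01 : ∀ x y, N x y = 0 ∨ N x y = 1 := by
    intro x y
    simp only [hNdef, Matrix.of_apply]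
    split_ifs with hE
    · rw [hEM x y hE]; left; ring
    · simpa using hM01 x y
  have hNne : ∀ x y, N x y ≠ 0 → M x y = 1 ∧
      ¬∃ i, (∃ x', f x' = Sum.inr i) ∧ f x = Sum.inl (parent i) ∧ (g y).val ∈ W i := by
    intro x y hne
    simp only [hNdef, Matrix.of_apply] at hne
    by_cases hE : ∃ i, (∃ x', f x' = Sum.inr i) ∧ f x = Sum.inl (parent i) ∧ (g y).val ∈ W i
    · rw [hEM x y hE, if_pos hE] at hne; simp at hne
    · rw [if_neg hE, sub_zero] at hne
      exact ⟨(hM01 x y).resolve_left hne, hE⟩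
  -- the class function
  set cls : Fin k → Bool :=
    fun x => Sum.elim (Sum.elim (fun _ => true) (fun _ => false))
      (fun i => (parent i).isLeft) (f x) with hclsdef
  -- column condition
  have hcol : ∀ y (x₁ x₂ : Fin k), cls x₁ = cls x₂ → N x₁ y ≠ 0 → N x₂ y ≠ 0 → x₁ = x₂ := by
    intro y x₁ x₂ hcls h1 h2
    obtain ⟨hM1, hE1⟩ := hNne x₁ y h1
    obtain ⟨hM2, hE2⟩ := hNne x₂ y h2
    clear h1 h2
    rcases hfx₁ : f x₁ with (a₁ | b₁) | i₁ <;> rcases hfx₂ : f x₂ with (a₂ | b₂) | i₂ <;>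
        rw [hclsdef] at hcls <;> simp only [hfx₁, hfx₂, Sum.elim_inl, Sum.elim_inr] at hcls
    -- vertical, vertical
    · have e1 : (g y).val.1 = a₁ := by
        by_contra h; simp [hMdef, gridWindowMatrix, hfx₁, h] at hM1
      have e2 : (g y).val.1 = a₂ := by
        by_contra h; simp [hMdef, gridWindowMatrix, hfx₂, h] at hM2
      exact hf (by rw [hfx₁, hfx₂, ← e1, ← e2])
    · exact absurd hcls (by simp)
    -- vertical, window
    · obtain ⟨r, hr⟩ := Sum.isLeft_iff.mp hcls.symm
      have hmem : (g y).val ∈ W i₂ := by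
        by_contra h; simp [hMdef, gridWindowMatrix, hfx₂, h] at hM2
      have hr1 : (g y).val.1 = r := by
        have := hpar i₂ (g y).val hmem; rw [hr] at this; exact this
      have e1 : (g y).val.1 = a₁ := by
        by_contra h; simp [hMdef, gridWindowMatrix, hfx₁, h] at hM1
      exact absurd ⟨i₂, ⟨x₂, hfx₂⟩, by rw [hfx₁, hr, ← hr1, e1], hmem⟩ hE1
    · exact absurd hcls (by simp)
    -- horizontal, horizontal
    · have e1 : (g y).val.2 = b₁ := by
        by_contra h; simp [hMdef, gridWindowMatrix, hfx₁, h] at hM1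
      have e2 : (g y).val.2 = b₂ := by
        by_contra h; simp [hMdef, gridWindowMatrix, hfx₂, h] at hM2
      exact hf (by rw [hfx₁, hfx₂, ← e1, ← e2])
    -- horizontal, window
    · have hnl : ¬ (parent i₂).isLeft := by simp [← hcls]
      obtain ⟨c, hc⟩ : ∃ c, parent i₂ = Sum.inr c := by
        rcases hp : parent i₂ with r | c
        · rw [hp] at hnl; simp at hnl
        · exact ⟨c, rfl⟩
      have hmem : (g y).val ∈ W i₂ := by
        by_contra h; simp [hMdef, gridWindowMatrix, hfx₂, h] at hM2
      have hc2 : (g y).val.2 = c := by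
        have := hpar i₂ (g y).val hmem; rw [hc] at this; exact this
      have e1 : (g y).val.2 = b₁ := by
        by_contra h; simp [hMdef, gridWindowMatrix, hfx₁, h] at hM1
      exact absurd ⟨i₂, ⟨x₂, hfx₂⟩, by rw [hfx₁, hc, ← hc2, e1], hmem⟩ hE1
    -- window, vertical
    · obtain ⟨r, hr⟩ := Sum.isLeft_iff.mp hcls
      have hmem : (g y).val ∈ W i₁ := by
        by_contra h; simp [hMdef, gridWindowMatrix, hfx₁, h] at hM1
      have hr1 : (g y).val.1 = r := by
        have := hpar i₁ (g y).val hmem; rw [hr] at this; exact this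
      have e2 : (g y).val.1 = a₂ := by
        by_contra h; simp [hMdef, gridWindowMatrix, hfx₂, h] at hM2
      exact absurd ⟨i₁, ⟨x₁, hfx₁⟩, by rw [hfx₂, hr, ← hr1, e2], hmem⟩ hE2
    -- window, horizontal
    · have hnl : ¬ (parent i₁).isLeft := by simp [hcls]
      obtain ⟨c, hc⟩ : ∃ c, parent i₁ = Sum.inr c := by
        rcases hp : parent i₁ with r | c
        · rw [hp] at hnl; simp at hnl
        · exact ⟨c, rfl⟩
      have hmem : (g y).val ∈ W i₁ := by
        by_contra h; simp [hMdef, gridWindowMatrix, hfx₁, h] at hM1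
      have hc2 : (g y).val.2 = c := by
        have := hpar i₁ (g y).val hmem; rw [hc] at this; exact this
      have e2 : (g y).val.2 = b₂ := by
        by_contra h; simp [hMdef, gridWindowMatrix, hfx₂, h] at hM2
      exact absurd ⟨i₁, ⟨x₁, hfx₁⟩, by rw [hfx₂, hc, ← hc2, e2], hmem⟩ hE2
    -- window, window
    · have hmem1 : (g y).val ∈ W i₁ := by
        by_contra h; simp [hMdef, gridWindowMatrix, hfx₁, h] at hM1
      have hmem2 : (g y).val ∈ W i₂ := by
        by_contra h; simp [hMdef, gridWindowMatrix, hfx₂, h] at hM2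
      obtain rfl : i₁ = i₂ := by
        by_contra hne
        exact Finset.disjoint_left.mp (hdisj i₁ i₂ hne) hmem1 hmem2
      exact hf (hfx₁.trans hfx₂.symm)
  -- conclude
  have hFN : (Matrix.of fun x y => M x y -
      ∑ x' ∈ Finset.univ, if ∃ i, f x' = Sum.inr i ∧ f x = Sum.inl (parent i)
        then M x' y else 0) = N := by
    ext x y
    simp only [Matrix.of_apply, hNdef]
    rw [hsum x y]
  have := det01_bipartite k N cls hN01 hcol
  rwa [← hFN, detF Finset.univ] at this
end
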